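/- Let n ≥ 1, c ∈ ℂ, and let Q ∈ ℂ[z₁,z₂] be a homogeneous polynomial of total degree n satisfying z₁·∂Q/∂z₁ + (z₂ + c·z₁)·∂Q/∂z₂ = 0. Then Q = 0. -/

import Mathlib

open MvPolynomial

lemma coeff_pderiv_aux (i : Fin 2) (m : Fin 2 →₀ ℕ) (p : MvPolynomial (Fin 2) ℂ) :
    coeff m (pderiv i p) = ((m i : ℂ) + 1) * coeff (m + Finsupp.single i 1) p := by
  induction p using MvPolynomial.induction_on' with
  | add p q hp hq => simp [hp, hq, mul_add]
  | monomial s a =>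
    rw [pderiv_monomial]
    simp only [coeff_monomial]
    by_cases hs : s = m + Finsupp.single i 1
    · have hsi : s i = m i + 1 := by simp [hs]
      have hd : s - Finsupp.single i 1 = m := by
        ext j
        by_cases hj : j = i
        · subst hj; simp [hsi]
        · simp [hs, Finsupp.single_apply, Ne.symm hj]
      simp only [if_pos hd, if_pos hs, hsi]
      push_cast
      ring
    · rw [if_neg hs, mul_zero]
      by_cases hd : s - Finsupp.single i 1 = m
      · rw [if_pos hd]
        have hsi : s i = 0 := by
          by_contra hne
          apply hs
          ext j
          have hdj := congrArg (fun f => f j) hd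
          simp only [Finsupp.sub_apply, Finsupp.single_apply, Finsupp.add_apply] at hdj ⊢
          by_cases hj : i = j
          · subst hj; simp at hdj ⊢; omega
          · simp [hj] at hdj ⊢; omega
        simp [hsi]
      · rw [if_neg hd]

lemma sub_add_cancel_aux (m : Fin 2 →₀ ℕ) (i : Fin 2) (hi : m i ≠ 0) :
    m - Finsupp.single i 1 + Finsupp.single i 1 = m := by
  ext j
  simp only [Finsupp.add_apply, Finsupp.sub_apply, Finsupp.single_apply]
  by_cases hj : i = j
  · subst hj; simp; omega
  · simp [hj]

lemma sub_apply_aux (m : Fin 2 →₀ ℕ) (i j : Fin 2) :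
    ((m - Finsupp.single i 1 : Fin 2 →₀ ℕ)) j = m j - (if i = j then 1 else 0) := by
  simp [Finsupp.sub_apply, Finsupp.single_apply]

theorem stmt_6 (n : ℕ) (hn : 1 ≤ n) (c : ℂ) (Q : MvPolynomial (Fin 2) ℂ)
    (hQ : Q.IsHomogeneous n)
    (h : MvPolynomial.X 0 * MvPolynomial.pderiv (0 : Fin 2) Q +
        (MvPolynomial.X 1 + MvPolynomial.C c * MvPolynomial.X 0) *
          MvPolynomial.pderiv (1 : Fin 2) Q = 0) :
    Q = 0 := by
  have h' : X 0 * pderiv (0 : Fin 2) Q + X 1 * pderiv (1 : Fin 2) Q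
      + C c * (X 0 * pderiv (1 : Fin 2) Q) = 0 := by linear_combination h
  -- degree fact
  have hdeg2 : ∀ m : Fin 2 →₀ ℕ, coeff m Q ≠ 0 → m 0 + m 1 = n := by
    intro m hne
    have hdeg := hQ hne
    rw [show (Finsupp.weight (1 : Fin 2 → ℕ)) = Finsupp.weight (fun _ => 1) from rfl,
      ← Finsupp.degree_eq_weight_one] at hdeg
    rw [← hdeg, Finsupp.degree_apply]
    rw [Finset.sum_subset (Finset.subset_univ m.support)
      (by intro x _ hx; simpa using hx)]
    simp [Fin.sum_univ_two]
  -- key coefficient identity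
  have key : ∀ m : Fin 2 →₀ ℕ,
      ((m 0 : ℂ) + (m 1 : ℂ)) * coeff m Q
        + c * ((m 1 : ℂ) + 1) * coeff (m - Finsupp.single 0 1 + Finsupp.single 1 1) Q
          * (if (0 : Fin 2) ∈ m.support then 1 else 0)
        = 0 := by
    intro m
    have hc := congrArg (coeff m) h'
    rw [coeff_add, coeff_add, coeff_C_mul, coeff_X_mul', coeff_X_mul', coeff_X_mul',
      coeff_zero] at hc
    simp only [coeff_pderiv_aux] at hc
    by_cases h0 : (0 : Fin 2) ∈ m.support
    · have hm0 : m 0 ≠ 0 := by simpa using h0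
      rw [if_pos h0, if_pos h0, sub_add_cancel_aux m 0 hm0] at hc
      have hv0 : (((m - Finsupp.single (0:Fin 2) 1 : Fin 2 →₀ ℕ)) 0 : ℂ) + 1 = (m 0 : ℂ) := by
        rw [sub_apply_aux m 0 0]
        simp only [if_pos rfl]
        have : (m 0 - 1) + 1 = m 0 := by omega
        exact_mod_cast congrArg (Nat.cast : ℕ → ℂ) this
      have hv01 : ((m - Finsupp.single (0:Fin 2) 1 : Fin 2 →₀ ℕ)) 1 = m 1 := by
        rw [sub_apply_aux m 0 1]; simp
      rw [hv0, hv01] at hc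
      rw [if_pos h0]
      by_cases h1 : (1 : Fin 2) ∈ m.support
      · have hm1 : m 1 ≠ 0 := by simpa using h1
        rw [if_pos h1, sub_add_cancel_aux m 1 hm1] at hc
        have hv1 : (((m - Finsupp.single (1:Fin 2) 1 : Fin 2 →₀ ℕ)) 1 : ℂ) + 1 = (m 1 : ℂ) := by
          rw [sub_apply_aux m 1 1]
          simp only [if_pos rfl]
          have : (m 1 - 1) + 1 = m 1 := by omega
          exact_mod_cast congrArg (Nat.cast : ℕ → ℂ) this
        rw [hv1] at hc
        linear_combination hc
      · have hm1 : m 1 = 0 := by simpa using h1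
        rw [if_neg h1] at hc
        rw [hm1] at hc ⊢
        push_cast
        linear_combination hc
    · have hm0 : m 0 = 0 := by simpa using h0
      rw [if_neg h0, if_neg h0] at hc
      rw [if_neg h0]
      rw [hm0]
      push_cast
      by_cases h1 : (1 : Fin 2) ∈ m.support
      · have hm1 : m 1 ≠ 0 := by simpa using h1
        rw [if_pos h1, sub_add_cancel_aux m 1 hm1] at hc
        have hv1 : (((m - Finsupp.single (1:Fin 2) 1 : Fin 2 →₀ ℕ)) 1 : ℂ) + 1 = (m 1 : ℂ) := by
          rw [sub_apply_aux m 1 1]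
          simp only [if_pos rfl]
          have : (m 1 - 1) + 1 = m 1 := by omega
          exact_mod_cast congrArg (Nat.cast : ℕ → ℂ) this
        rw [hv1] at hc
        linear_combination hc
      · have hm1 : m 1 = 0 := by simpa using h1
        rw [if_neg h1] at hc
        rw [hm1]
        push_cast
        linear_combination hc
  -- induction on m 0
  have main : ∀ a : ℕ, ∀ m : Fin 2 →₀ ℕ, m 0 = a → coeff m Q = 0 := by
    intro a
    induction a with
    | zero =>
      intro m hm
      have hk := key m
      have h0 : (0 : Fin 2) ∉ m.support := by simp [hm]
      rw [if_neg h0, hm] at hk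
      by_contra hne
      have hd2 : 0 + m 1 = n := by rw [← hm]; exact hdeg2 m hne
      have hm1n : (m 1 : ℂ) ≠ 0 := by
        exact_mod_cast Nat.cast_ne_zero.mpr (show m 1 ≠ 0 by omega)
      have hz : (m 1 : ℂ) * coeff m Q = 0 := by
        push_cast at hk
        linear_combination hk
      rcases mul_eq_zero.mp hz with h' | h'
      · exact hm1n h'
      · exact hne h'
    | succ a ih =>
      intro m hm
      have hk := key m
      have hprev : coeff (m - Finsupp.single 0 1 + Finsupp.single 1 1) Q = 0 := by
        apply ih
        rw [Finsupp.add_apply, sub_apply_aux m 0 0, Finsupp.single_apply]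
        simp [hm]
      rw [hprev] at hk
      by_contra hne
      have hd2 : m 0 + m 1 = n := hdeg2 m hne
      have hnc : ((m 0 : ℂ) + (m 1 : ℂ)) ≠ 0 := by
        have he : ((m 0 : ℂ) + (m 1 : ℂ)) = (n : ℂ) := by exact_mod_cast hd2
        rw [he]
        exact_mod_cast Nat.cast_ne_zero.mpr (by omega)
      have hz : ((m 0 : ℂ) + (m 1 : ℂ)) * coeff m Q = 0 := by linear_combination hk
      rcases mul_eq_zero.mp hz with h' | h'
      · exact hnc h'
      · exact hne h'
  ext m
  rw [coeff_zero]
  exact main (m 0) m rfl
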